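/- For strictly positive p on [m], the map W with W_i(p) = ∑_{j≠i} p_i/(p_i + p_j) is injective on the open probability simplex: if p, q are strictly positive probability distributions on [m] with W(p) = W(q), then p = q. -/

import Mathlib

open Finset

lemma offdiag_sum_const {m : ℕ} (S : Finset (Fin m)) (r : Fin m → ℝ) (hr : ∀ i, 0 < r i) :
    2 * ∑ i ∈ S, ∑ j ∈ S.erase i, r i / (r i + r j)
      = ∑ i ∈ S, ((S.erase i).card : ℝ) := by
  have hswap : ∑ i ∈ S, ∑ j ∈ S.erase i, r j / (r j + r i)
      = ∑ i ∈ S, ∑ j ∈ S.erase i, r i / (r i + r j) := by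
    rw [Finset.sum_comm' (s := S) (t := fun i => S.erase i) (t' := S)
        (s' := fun j => S.erase j) (f := fun i j => r j / (r j + r i))]
    intro x y
    simp only [mem_erase]
    tauto
  have h1 : ∀ i ∈ S, ∀ j ∈ S.erase i,
      r i / (r i + r j) + r j / (r j + r i) = 1 := by
    intro i _ j _
    have h0 : r i + r j > 0 := by have := hr i; have := hr j; linarith
    rw [add_comm (r j) (r i), ← add_div, div_self (ne_of_gt h0)]
  calc 2 * ∑ i ∈ S, ∑ j ∈ S.erase i, r i / (r i + r j)
      = ∑ i ∈ S, ∑ j ∈ S.erase i, (r i / (r i + r j) + r j / (r j + r i)) := by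
        simp [Finset.sum_add_distrib, hswap]; ring
    _ = ∑ i ∈ S, ∑ j ∈ S.erase i, (1 : ℝ) := by
        apply Finset.sum_congr rfl; intro i hi
        exact Finset.sum_congr rfl fun j hj => h1 i hi j hj
    _ = ∑ i ∈ S, ((S.erase i).card : ℝ) := by simp

/-- The map `W_i(p) = ∑_{j≠i} p_i/(p_i+p_j)` is injective on the open probability
simplex. -/
theorem stmt_19 (m : ℕ) (p q : Fin m → ℝ)
    (hp : ∀ i, 0 < p i) (hq : ∀ i, 0 < q i)
    (hps : ∑ i, p i = 1) (hqs : ∑ i, q i = 1)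
    (hW : ∀ i, ∑ j ∈ Finset.univ \ {i}, p i / (p i + p j)
            = ∑ j ∈ Finset.univ \ {i}, q i / (q i + q j)) :
    p = q := by
  classical
  set S : Finset (Fin m) := Finset.univ.filter (fun i => q i < p i) with hS
  by_cases hSe : S = ∅
  · -- p ≤ q everywhere, equal sums ⇒ p = q
    have hle : ∀ i, p i ≤ q i := by
      intro i
      by_contra h
      have : i ∈ S := by simp [hS, lt_of_not_ge h]
      simp [hSe] at this
    funext i
    have hsum : ∑ j, (q j - p j) = 0 := by
      rw [Finset.sum_sub_distrib, hps, hqs]; ring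
    have := (Finset.sum_eq_zero_iff_of_nonneg (fun j _ => sub_nonneg.mpr (hle j))).mp hsum
      i (Finset.mem_univ i)
    linarith
  · have hSne : S.Nonempty := Finset.nonempty_of_ne_empty hSe
    by_cases hSu : Sᶜ = ∅
    · -- q < p everywhere ⇒ sum contradiction
      exfalso
      have hall : ∀ i, q i < p i := by
        intro i
        by_contra h
        have : i ∈ Sᶜ := by simp [hS, le_of_not_gt h]
        simp [hSu] at this
      have : (∑ i, q i) < ∑ i, p i :=
        Finset.sum_lt_sum_of_nonempty ⟨hSne.choose, Finset.mem_univ _⟩ fun i _ => hall i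
      rw [hps, hqs] at this; exact lt_irrefl _ this
    · exfalso
      have hScne : (Sᶜ : Finset (Fin m)).Nonempty := Finset.nonempty_of_ne_empty hSu
      -- split univ \ {i} = S.erase i ∪ Sᶜ for i ∈ S
      have hsplit : ∀ (r : Fin m → ℝ), ∀ i ∈ S,
          ∑ j ∈ Finset.univ \ {i}, r i / (r i + r j)
            = (∑ j ∈ S.erase i, r i / (r i + r j))
              + ∑ j ∈ Sᶜ, r i / (r i + r j) := by
        intro r i hi
        rw [← Finset.sum_union]
        · apply Finset.sum_congr _ fun _ _ => rfl
          ext j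
          simp only [Finset.mem_sdiff, Finset.mem_union, Finset.mem_erase, Finset.mem_compl,
            Finset.mem_univ, Finset.mem_singleton, true_and]
          constructor
          · intro hj
            by_cases hjS : j ∈ S
            · exact Or.inl ⟨hj, hjS⟩
            · exact Or.inr hjS
          · rintro (⟨hj, _⟩ | hj)
            · exact hj
            · intro hji; subst hji; exact hj hi
        · rw [Finset.disjoint_left]
          intro j hj
          simp only [Finset.mem_erase] at hj
          simp [hj.2]
      have hsumW : ∑ i ∈ S, ∑ j ∈ Finset.univ \ {i}, p i / (p i + p j)
          = ∑ i ∈ S, ∑ j ∈ Finset.univ \ {i}, q i / (q i + q j) :=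
        Finset.sum_congr rfl fun i _ => hW i
      have hdiagp := offdiag_sum_const S p hp
      have hdiagq := offdiag_sum_const S q hq
      have hdiag : ∑ i ∈ S, ∑ j ∈ S.erase i, p i / (p i + p j)
          = ∑ i ∈ S, ∑ j ∈ S.erase i, q i / (q i + q j) := by
        linarith
      have hcross : ∑ i ∈ S, ∑ j ∈ Sᶜ, p i / (p i + p j)
          = ∑ i ∈ S, ∑ j ∈ Sᶜ, q i / (q i + q j) := by
        have hp' : ∑ i ∈ S, ((∑ j ∈ S.erase i, p i / (p i + p j))
            + ∑ j ∈ Sᶜ, p i / (p i + p j))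
            = ∑ i ∈ S, ((∑ j ∈ S.erase i, q i / (q i + q j))
            + ∑ j ∈ Sᶜ, q i / (q i + q j)) := by
          rw [← Finset.sum_congr rfl (hsplit p), ← Finset.sum_congr rfl (hsplit q)]
          exact hsumW
        rw [Finset.sum_add_distrib, Finset.sum_add_distrib] at hp'
        linarith
      -- strict inequality on the cross terms
      have hstrict : ∑ i ∈ S, ∑ j ∈ Sᶜ, q i / (q i + q j)
          < ∑ i ∈ S, ∑ j ∈ Sᶜ, p i / (p i + p j) := by
        apply Finset.sum_lt_sum_of_nonempty hSne
        intro i hi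
        apply Finset.sum_lt_sum_of_nonempty hScne
        intro j hj
        have hiS : q i < p i := by simpa [hS] using hi
        have hjS : p j ≤ q j := by
          simp only [Finset.mem_compl, hS, Finset.mem_filter, Finset.mem_univ, true_and,
            not_lt] at hj
          exact hj
        have h1 : 0 < p i + p j := by have := hp i; have := hp j; linarith
        have h2 : 0 < q i + q j := by have := hq i; have := hq j; linarith
        rw [div_lt_div_iff₀ h2 h1]
        nlinarith [mul_lt_mul_of_pos_right hiS (hp j),
          mul_le_mul_of_nonneg_left hjS (le_of_lt (hp i))]
      linarith
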